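/- Fix an odd integer k = 2q+1 ≥ 5 and let I_k be the odd interior gadget. Then for every k-leaf root T of I_k, if m_T(t) = k then m_T(b) = 3. -/

import Mathlib

open SimpleGraph

/-- A vertex of a graph is a leaf if it has exactly one neighbor. -/
def IsLeafVert {W : Type} (T : SimpleGraph W) (w : W) : Prop := ∃! u, T.Adj w u

/-- `T` (a finite tree on vertex type `W`) together with the injection `f` of the
vertices of `G` onto the leaves of `T` is a `k`-leaf root of `G`:  the leaves of `T`
are exactly the image of `f`, and two distinct vertices of `G` are adjacent iff
their distance in `T` is at most `k`. -/
def IsLeafRoot {V W : Type} (G : SimpleGraph V) (k : ℕ)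
    (T : SimpleGraph W) (f : V → W) : Prop :=
  Finite W ∧ T.IsTree ∧ Function.Injective f ∧
    (∀ w : W, (∃ v, f v = w) ↔ IsLeafVert T w) ∧
    (∀ u v : V, u ≠ v → (G.Adj u v ↔ T.dist (f u) (f v) ≤ k))

/-- `G` is a `k`-leaf power: it admits a `k`-leaf root. -/
def IsKLeafPower {V : Type} (G : SimpleGraph V) (k : ℕ) : Prop :=
  ∃ (W : Type) (T : SimpleGraph W) (f : V → W), IsLeafRoot G k T f

/-- `m_T(v)`: the minimum over all `u ≠ v` of the distance in the leaf root `T`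
between the leaves corresponding to `u` and `v`. -/
noncomputable def mval {V W : Type} (T : SimpleGraph W) (f : V → W) (v : V) : ℕ :=
  sInf {d | ∃ u, u ≠ v ∧ T.dist (f u) (f v) = d}

/-- A vertex has degree at least three. -/
def HasDegreeGEThree {W : Type} (T : SimpleGraph W) (w : W) : Prop :=
  ∃ a b c : W, a ≠ b ∧ a ≠ c ∧ b ≠ c ∧ T.Adj w a ∧ T.Adj w b ∧ T.Adj w c

/-- A spine of a tree: a path containing every vertex of degree at least 3.  A tree
having a spine is exactly a caterpillar subdivision. -/
def IsSpine {W : Type} (T : SimpleGraph W) {a b : W} (p : T.Walk a b) : Prop :=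
  p.IsPath ∧ ∀ w : W, HasDegreeGEThree T w → w ∈ p.support

/-- A linear `k`-leaf root: a `k`-leaf root whose tree is a caterpillar subdivision. -/
def IsLinearLeafRoot {V W : Type} (G : SimpleGraph V) (k : ℕ)
    (T : SimpleGraph W) (f : V → W) : Prop :=
  IsLeafRoot G k T f ∧ ∃ (a b : W) (p : T.Walk a b), IsSpine T p

/-- `G` is a linear `k`-leaf power: it admits a linear `k`-leaf root. -/
def IsLinearKLeafPower {V : Type} (G : SimpleGraph V) (k : ℕ) : Prop :=
  ∃ (W : Type) (T : SimpleGraph W) (f : V → W), IsLinearLeafRoot G k T f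

/-- A cycle of length `n` in `G`, given as an injective map from `ZMod n` with
consecutive images adjacent. -/
def IsCycleIn {V : Type} (G : SimpleGraph V) (n : ℕ) (f : ZMod n → V) : Prop :=
  Function.Injective f ∧ ∀ i : ZMod n, G.Adj (f i) (f (i + 1))

/-- `G` is chordal: every cycle of length at least 4 has a chord. -/
def Chordal {V : Type} (G : SimpleGraph V) : Prop :=
  ∀ n : ℕ, 4 ≤ n → ∀ f : ZMod n → V, IsCycleIn G n f →
    ∃ i j : ZMod n, j ≠ i ∧ j ≠ i + 1 ∧ j ≠ i - 1 ∧ G.Adj (f i) (f j)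

/-- `G` is strongly chordal: chordal, and every even cycle of length at least 6 has
an odd chord (a chord joining two vertices an odd distance apart along the cycle). -/
def StronglyChordal {V : Type} (G : SimpleGraph V) : Prop :=
  Chordal G ∧ ∀ n : ℕ, 6 ≤ n → Even n → ∀ f : ZMod n → V, IsCycleIn G n f →
    ∃ i j : ZMod n, Odd ((j - i).val) ∧ j ≠ i + 1 ∧ j ≠ i - 1 ∧ G.Adj (f i) (f j)

/-- Vertices of the odd interior gadget for `k = 2q+1`: `t`, `b`,
`x i` for `i : Fin q` (representing `x_{i+1}`), and `y i` for `i : Fin (q-1)`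
(representing `y_{i+2}`). -/
inductive IVert (q : ℕ) : Type where
  | t : IVert q
  | b : IVert q
  | x : Fin q → IVert q
  | y : Fin (q - 1) → IVert q

/-- The odd interior gadget `I_k` for odd `k = 2q+1 ≥ 5`: edges `t x_i` and `b x_i`
for all `1 ≤ i ≤ q`, `x_i x_j` for `i < j` (so `X` is a clique), `y_i x_j` for
`2 ≤ i ≤ j ≤ q`, and `b y_q`. -/
def oddGadget (q : ℕ) : SimpleGraph (IVert q) :=
  SimpleGraph.fromRel (fun u v => match u, v with
    | .t, .x _ => True
    | .b, .x _ => True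
    | .x i, .x j => i ≠ j
    | .y a, .x c => (a : ℕ) + 1 ≤ (c : ℕ)
    | .b, .y a => (a : ℕ) = q - 2
    | _, _ => False)

/-! ### Auxiliary tree lemmas -/

section TreeAux
variable {W : Type} {T : SimpleGraph W}

lemma og_path_length_eq (hT : T.IsTree) {u v : W} {p : T.Walk u v} (hp : p.IsPath) :
    p.length = T.dist u v := by
  obtain ⟨p', hp', hl⟩ := hT.isConnected.exists_path_of_dist u v
  rwa [(hT.existsUnique_path u v).unique hp hp']

lemma og_append_isPath {u v w : W} {p : T.Walk u v} {q : T.Walk v w}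
    (hp : p.IsPath) (hq : q.IsPath)
    (h : ∀ x, x ∈ p.support → x ∈ q.support → x = v) : (p.append q).IsPath := by
  rw [Walk.isPath_def, Walk.support_append]
  apply List.Nodup.append hp.support_nodup (hq.support_nodup.tail)
  intro x hxp hxq
  have hx : x ∈ q.support := by
    rw [q.support_eq_cons]; exact List.mem_cons_of_mem _ hxq
  have hxv := h x hxp hx
  subst hxv
  have hnd := hq.support_nodup
  rw [q.support_eq_cons] at hnd
  exact (List.nodup_cons.mp hnd).1 hxq

lemma og_first_touch {a c : W} (q : T.Walk a c) (L : List W) (hc : c ∈ L) :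
    ∃ (m : W) (r : T.Walk a m), m ∈ L ∧ (∀ x ∈ r.support, x ∈ L → x = m) ∧
      r.support ⊆ q.support ∧ (q.IsPath → r.IsPath) := by
  induction q with
  | nil => exact ⟨_, Walk.nil, hc, by simp, by simp, fun _ => Walk.IsPath.nil⟩
  | @cons u v c' hadj q ih =>
    by_cases hu : u ∈ L
    · refine ⟨u, Walk.nil, hu, by simp, by simp, fun _ => Walk.IsPath.nil⟩
    · obtain ⟨m, r, hm, hfirst, hsub, hpath⟩ := ih hc
      refine ⟨m, Walk.cons hadj r, hm, ?_, ?_, ?_⟩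
      · intro x hx hxL
        rcases List.mem_cons.mp (by simpa using hx) with rfl | hx'
        · exact absurd hxL hu
        · exact hfirst x hx' hxL
      · intro x hx
        rw [Walk.support_cons] at hx ⊢
        rcases List.mem_cons.mp hx with rfl | hx'
        · exact List.mem_cons_self
        · exact List.mem_cons_of_mem _ (hsub hx')
      · intro hP
        rw [Walk.cons_isPath_iff] at hP ⊢
        exact ⟨hpath hP.1, fun hmem => hP.2 (hsub hmem)⟩

lemma og_tree_split (hT : T.IsTree) {c d m : W} {p : T.Walk c d} (hp : p.IsPath)
    (hm : m ∈ p.support) : T.dist c m + T.dist m d = T.dist c d := by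
  letI := Classical.decEq W
  have h1 := og_path_length_eq hT (hp.takeUntil hm)
  have h2 := og_path_length_eq hT (hp.dropUntil hm)
  have h3 := og_path_length_eq hT hp
  have := congr_arg Walk.length (p.take_spec hm)
  rw [Walk.length_append] at this
  omega

lemma og_tree_med (hT : T.IsTree) (a : W) {c d : W} (p : T.Walk c d) (hp : p.IsPath) :
    ∃ m, m ∈ p.support ∧ T.dist a c = T.dist a m + T.dist m c ∧
      T.dist a d = T.dist a m + T.dist m d := by
  letI := Classical.decEq W
  obtain ⟨q, hq, hql⟩ := hT.isConnected.exists_path_of_dist a c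
  obtain ⟨m, r, hm, hfirst, hsub, hrp⟩ := og_first_touch q p.support (p.start_mem_support)
  have hr := hrp hq
  refine ⟨m, hm, ?_, ?_⟩
  · have h1 : (r.append ((p.takeUntil m hm).reverse)).IsPath := by
      apply og_append_isPath hr ((hp.takeUntil hm).reverse)
      intro x hx1 hx2
      exact hfirst x hx1 (p.support_takeUntil_subset hm (by simpa using hx2))
    have l1 := og_path_length_eq hT h1
    rw [Walk.length_append, Walk.length_reverse] at l1
    have l2 := og_path_length_eq hT hr
    have l3 := og_path_length_eq hT ((hp.takeUntil hm).reverse)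
    rw [Walk.length_reverse] at l3
    have l4 := og_path_length_eq hT (hp.takeUntil hm)
    have hcm : T.dist c m = T.dist m c := SimpleGraph.dist_comm ..
    omega
  · have h1 : (r.append (p.dropUntil m hm)).IsPath := by
      apply og_append_isPath hr (hp.dropUntil hm)
      intro x hx1 hx2
      exact hfirst x hx1 (p.support_dropUntil_subset hm hx2)
    have l1 := og_path_length_eq hT h1
    rw [Walk.length_append] at l1
    have l2 := og_path_length_eq hT hr
    have l3 := og_path_length_eq hT (hp.dropUntil hm)
    omega

lemma og_tree_order (hT : T.IsTree) {c d m m' : W} {p : T.Walk c d} (hp : p.IsPath)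
    (hm : m ∈ p.support) (hm' : m' ∈ p.support) :
    T.dist c m' + T.dist m' m = T.dist c m ∨ T.dist m m' + T.dist m' d = T.dist m d := by
  letI := Classical.decEq W
  have hspec := p.take_spec hm
  have hmem : m' ∈ (p.takeUntil m hm).support ∨ m' ∈ (p.dropUntil m hm).support := by
    rw [← Walk.mem_support_append_iff, hspec]; exact hm'
  rcases hmem with h | h
  · exact Or.inl (og_tree_split hT (hp.takeUntil hm) h)
  · exact Or.inr (og_tree_split hT (hp.dropUntil hm) h)

lemma og_tree_fourpt (hT : T.IsTree) (a b c d : W) :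
    T.dist a b + T.dist c d ≤
      max (T.dist a c + T.dist b d) (T.dist a d + T.dist b c) := by
  obtain ⟨p, hp, _⟩ := hT.isConnected.exists_path_of_dist c d
  obtain ⟨m, hm, ha1, ha2⟩ := og_tree_med hT a p hp
  obtain ⟨m', hm', hb1, hb2⟩ := og_tree_med hT b p hp
  have hs1 := og_tree_split hT hp hm
  have hs2 := og_tree_split hT hp hm'
  have tri : T.dist a b ≤ T.dist a m + (T.dist m m' + T.dist m' b) :=
    le_trans (hT.isConnected.dist_triangle (v := m)) (by
      have := hT.isConnected.dist_triangle (u := m) (v := m') (w := b)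
      omega)
  have c1 : T.dist m' b = T.dist b m' := SimpleGraph.dist_comm ..
  have c2 : T.dist m c = T.dist c m := SimpleGraph.dist_comm ..
  have c3 : T.dist m' c = T.dist c m' := SimpleGraph.dist_comm ..
  have c4 : T.dist m' m = T.dist m m' := SimpleGraph.dist_comm ..
  rcases og_tree_order hT hp hm hm' with h | h
  · apply le_max_of_le_left; omega
  · apply le_max_of_le_right; omega

lemma og_tree_parity (hT : T.IsTree) (a b c : W) :
    ∃ n : ℕ, T.dist a b + T.dist a c + T.dist b c = 2 * n := by
  obtain ⟨p, hp, _⟩ := hT.isConnected.exists_path_of_dist b c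
  obtain ⟨m, hm, h1, h2⟩ := og_tree_med hT a p hp
  have hs := og_tree_split hT hp hm
  have c2 : T.dist m b = T.dist b m := SimpleGraph.dist_comm ..
  have c3 : T.dist m c = T.dist c m := SimpleGraph.dist_comm ..
  exact ⟨T.dist a m + T.dist b c, by omega⟩

lemma og_leaf_dist (hT : T.IsTree) {v c : W} (hvc : T.Adj v c)
    (huniq : ∀ x, T.Adj v x → x = c) {u : W} (hne : u ≠ v) :
    T.dist u v = T.dist u c + 1 := by
  have hpos : 0 < T.dist u v := hT.isConnected.pos_dist_of_ne hne
  obtain ⟨p, hp, hl⟩ := hT.isConnected.exists_path_of_dist u v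
  obtain ⟨x, hadj, q, hq⟩ := Walk.exists_eq_cons_of_ne (Ne.symm hne) p.reverse
  have hx : x = c := huniq x hadj
  rw [← hx]
  have hql : q.length = p.length - 1 := by
    have := congr_arg Walk.length hq
    rw [Walk.length_reverse, Walk.length_cons] at this
    omega
  have h1 : T.dist x u ≤ q.length := SimpleGraph.dist_le q
  have h2 : T.dist u v ≤ T.dist u x + T.dist x v := hT.isConnected.dist_triangle
  have h3 : T.dist x v = 1 := by
    rw [SimpleGraph.dist_comm]; exact (SimpleGraph.dist_eq_one_iff_adj).mpr (hx ▸ hvc)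
  have h4 : T.dist x u = T.dist u x := SimpleGraph.dist_comm ..
  omega

lemma og_leaf_strict_tri (hT : T.IsTree) {u v w : W}
    (hu : ∃! x, T.Adj u x) (hvu : v ≠ u) (hwu : w ≠ u) :
    T.dist v w + 2 ≤ T.dist v u + T.dist u w := by
  obtain ⟨c, hc, huniq⟩ := hu
  have h1 := og_leaf_dist hT hc huniq hvu
  have h2 := og_leaf_dist hT hc huniq hwu
  have h3 : T.dist v w ≤ T.dist v c + T.dist c w := hT.isConnected.dist_triangle
  have h4 : T.dist c w = T.dist w c := SimpleGraph.dist_comm ..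
  have h5 : T.dist u w = T.dist w u := SimpleGraph.dist_comm ..
  omega

lemma og_leaf_dist_ge_two (hT : T.IsTree) {u v w : W}
    (hu : ∃! x, T.Adj u x) (hv : ∃! x, T.Adj v x)
    (huv : u ≠ v) (hwu : w ≠ u) (hwv : w ≠ v) :
    2 ≤ T.dist u v := by
  have hpos : 0 < T.dist u v := hT.isConnected.pos_dist_of_ne huv
  by_contra h
  have h1 : T.dist u v = 1 := by omega
  have hadj : T.Adj u v := SimpleGraph.dist_eq_one_iff_adj.mp h1
  obtain ⟨c, hc, hcuniq⟩ := hu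
  obtain ⟨d, hd, hduniq⟩ := hv
  have hcv := hcuniq v hadj
  have hdu := hduniq u hadj.symm
  subst hcv hdu
  have e1 : T.dist w u = T.dist w v + 1 := og_leaf_dist hT hc hcuniq hwu
  have e2 : T.dist w v = T.dist w u + 1 := og_leaf_dist hT hd hduniq hwv
  omega

end TreeAux

/-! ### Gadget adjacency lemmas -/

section GadgetAux
variable {q : ℕ}

lemma og_adj_tx (i : Fin q) : (oddGadget q).Adj .t (.x i) := by simp [oddGadget]
lemma og_adj_bx (i : Fin q) : (oddGadget q).Adj .b (.x i) := by simp [oddGadget]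
lemma og_adj_xx {i j : Fin q} (h : i ≠ j) : (oddGadget q).Adj (.x i) (.x j) := by
  simp [oddGadget, h]
lemma og_adj_yx {a : Fin (q-1)} {i : Fin q} (h : (a : ℕ) < (i : ℕ)) :
    (oddGadget q).Adj (.y a) (.x i) := by
  simp [oddGadget]; omega
lemma og_adj_by {a : Fin (q-1)} (h : (a : ℕ) = q - 2) : (oddGadget q).Adj .b (.y a) := by
  simp [oddGadget, h]
lemma og_nadj_tb : ¬ (oddGadget q).Adj .t .b := by simp [oddGadget]
lemma og_nadj_ty (a : Fin (q-1)) : ¬ (oddGadget q).Adj .t (.y a) := by simp [oddGadget]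
lemma og_nadj_yx {a : Fin (q-1)} {i : Fin q} (h : (i : ℕ) ≤ (a : ℕ)) :
    ¬ (oddGadget q).Adj (.y a) (.x i) := by
  simp [oddGadget]; omega
lemma og_nadj_by {a : Fin (q-1)} (h : (a : ℕ) ≠ q - 2) : ¬ (oddGadget q).Adj .b (.y a) := by
  simp [oddGadget, h]

/-- The `m`-th `x`-vertex, with harmless total indexing. -/
def Xv (q : ℕ) (hq : 0 < q) (m : ℕ) : IVert q := IVert.x ⟨m % q, Nat.mod_lt m hq⟩
/-- The `m`-th `y`-vertex, with harmless total indexing. -/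
def Yv (q : ℕ) (hq : 0 < q - 1) (m : ℕ) : IVert q := IVert.y ⟨m % (q-1), Nat.mod_lt m hq⟩

lemma Xv_val {hq : 0 < q} {m : ℕ} (hm : m < q) : Xv q hq m = IVert.x ⟨m, hm⟩ := by
  simp [Xv, Nat.mod_eq_of_lt hm]
lemma Yv_val {hq : 0 < q - 1} {m : ℕ} (hm : m < q - 1) : Yv q hq m = IVert.y ⟨m, hm⟩ := by
  simp [Yv, Nat.mod_eq_of_lt hm]

end GadgetAux
theorem odd_gadget_forced (q : ℕ) (hq : 2 ≤ q) (k : ℕ) (hk : k = 2 * q + 1)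
    (W : Type) (T : SimpleGraph W) (f : IVert q → W)
    (hroot : IsLeafRoot (oddGadget q) k T f)
    (ht : mval T f IVert.t = k) :
    mval T f IVert.b = 3 := by
  subst hk
  obtain ⟨hFin, hTree, hInj, hLeafIff, hAdj⟩ := hroot
  have hq0 : 0 < q := by omega
  have hq10 : 0 < q - 1 := by omega
  have hComm : ∀ u v : IVert q, T.dist (f u) (f v) = T.dist (f v) (f u) :=
    fun u v => SimpleGraph.dist_comm ..
  have hfne : ∀ {u v : IVert q}, u ≠ v → f u ≠ f v := fun h he => h (hInj he)
  have hleaf : ∀ v : IVert q, ∃! x, T.Adj (f v) x := fun v => (hLeafIff (f v)).mp ⟨v, rfl⟩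
  have hT2 : ∀ u v w : IVert q, v ≠ u → w ≠ u →
      T.dist (f v) (f w) + 2 ≤ T.dist (f v) (f u) + T.dist (f u) (f w) :=
    fun u v w hvu hwu => og_leaf_strict_tri hTree (hleaf u) (hfne hvu) (hfne hwu)
  have hPar : ∀ u v w : IVert q, ∃ n,
      T.dist (f u) (f v) + T.dist (f u) (f w) + T.dist (f v) (f w) = 2 * n :=
    fun u v w => og_tree_parity hTree (f u) (f v) (f w)
  have hHyp : ∀ u v w : IVert q,
      T.dist (f IVert.t) (f v) + T.dist (f u) (f w) ≤
        T.dist (f IVert.t) (f u) + T.dist (f v) (f w) ∨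
      T.dist (f IVert.t) (f v) + T.dist (f u) (f w) ≤
        T.dist (f IVert.t) (f w) + T.dist (f v) (f u) :=
    fun u v w => le_max_iff.mp (og_tree_fourpt hTree (f IVert.t) (f v) (f u) (f w))
  have hD2 : ∀ u v w : IVert q, u ≠ v → w ≠ u → w ≠ v → 2 ≤ T.dist (f u) (f v) :=
    fun u v w huv hwu hwv =>
      og_leaf_dist_ge_two hTree (hleaf u) (hleaf v) (hfne huv) (hfne hwu) (hfne hwv)
  -- minimality at t
  have hkt : ∀ u : IVert q, u ≠ IVert.t → 2*q+1 ≤ T.dist (f u) (f IVert.t) := by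
    intro u hu
    have h := Nat.sInf_le
      (s := {d | ∃ u', u' ≠ IVert.t ∧ T.dist (f u') (f IVert.t) = d}) ⟨u, hu, rfl⟩
    have ht' : sInf {d | ∃ u', u' ≠ IVert.t ∧ T.dist (f u') (f IVert.t) = d} = 2*q+1 := ht
    omega
  -- adjacency translations
  have hAdjLe : ∀ {u v : IVert q}, u ≠ v → (oddGadget q).Adj u v →
      T.dist (f u) (f v) ≤ 2*q+1 := fun h ha => (hAdj _ _ h).mp ha
  have hAdjGt : ∀ {u v : IVert q}, u ≠ v → ¬ (oddGadget q).Adj u v →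
      2*q+2 ≤ T.dist (f u) (f v) := by
    intro u v h hna
    by_contra hlt
    exact hna ((hAdj _ _ h).mpr (by omega))
  have A1 : ∀ i : Fin q, T.dist (f IVert.t) (f (IVert.x i)) = 2*q+1 := by
    intro i
    have h1 : T.dist (f IVert.t) (f (IVert.x i)) ≤ 2*q+1 := hAdjLe (by simp) (og_adj_tx i)
    have h2 := hkt (IVert.x i) (by simp)
    have h3 := hComm IVert.t (IVert.x i)
    omega
  have A2 : 2*q+2 ≤ T.dist (f IVert.t) (f IVert.b) := hAdjGt (by simp) og_nadj_tb
  have A3 : ∀ a : Fin (q-1), 2*q+2 ≤ T.dist (f IVert.t) (f (IVert.y a)) :=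
    fun a => hAdjGt (by simp) (og_nadj_ty a)
  have A4 : ∀ i : Fin q, T.dist (f IVert.b) (f (IVert.x i)) ≤ 2*q+1 :=
    fun i => hAdjLe (by simp) (og_adj_bx i)
  have A5 : T.dist (f IVert.b) (f (IVert.y ⟨q-2, by omega⟩)) ≤ 2*q+1 :=
    hAdjLe (by simp) (og_adj_by rfl)
  have A6 : ∀ (a : Fin (q-1)) (i : Fin q), (a:ℕ) < (i:ℕ) →
      T.dist (f (IVert.y a)) (f (IVert.x i)) ≤ 2*q+1 :=
    fun a i h => hAdjLe (by simp) (og_adj_yx h)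
  have A7 : ∀ (a : Fin (q-1)) (i : Fin q), (i:ℕ) ≤ (a:ℕ) →
      2*q+2 ≤ T.dist (f (IVert.y a)) (f (IVert.x i)) :=
    fun a i h => hAdjGt (by simp) (og_nadj_yx h)
  have A8 : ∀ i j : Fin q, i ≠ j → T.dist (f (IVert.x i)) (f (IVert.x j)) ≤ 2*q+1 :=
    fun i j h => hAdjLe (by simpa) (og_adj_xx h)
  -- Part (i): every leaf is at distance ≥ 3 from b
  have hLB : ∀ u : IVert q, u ≠ IVert.b → 3 ≤ T.dist (f u) (f IVert.b) := by
    intro u hu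
    have htr : T.dist (f u) (f IVert.b) = 2 → ∀ w : IVert q, w ≠ u → w ≠ IVert.b →
        T.dist (f w) (f u) = T.dist (f w) (f IVert.b) := by
      intro h2 w hwu hwb
      have e1 := hT2 u w IVert.b hwu (Ne.symm hu)
      have e2 := hT2 IVert.b w u hwb hu
      have c1 := hComm u IVert.b
      omega
    cases u with
    | t => have := A2; omega
    | b => exact absurd rfl hu
    | x i =>
      have h2 : 2 ≤ T.dist (f (IVert.x i)) (f IVert.b) :=
        hD2 _ _ IVert.t (by simp) (by simp) (by simp)
      by_contra hlt
      have h2' : T.dist (f (IVert.x i)) (f IVert.b) = 2 := by omega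
      have h3 := htr h2' IVert.t (by simp) (by simp)
      have h4 := A1 i
      omega
    | y a =>
      have h2 : 2 ≤ T.dist (f (IVert.y a)) (f IVert.b) :=
        hD2 _ _ IVert.t (by simp) (by simp) (by simp)
      by_contra hlt
      have h2' : T.dist (f (IVert.y a)) (f IVert.b) = 2 := by omega
      have h3 := htr h2' (IVert.x ⟨0, hq0⟩) (by simp) (by simp)
      have h4 := A7 a ⟨0, hq0⟩ (by simp)
      have h5 := A4 ⟨0, hq0⟩
      have c1 := hComm (IVert.x ⟨0, hq0⟩) (IVert.y a)
      have c2 := hComm IVert.b (IVert.x ⟨0, hq0⟩)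
      omega
  -- nat-indexed adjacency facts
  have N1 : ∀ m, m < q → T.dist (f IVert.t) (f (Xv q hq0 m)) = 2*q+1 := by
    intro m hm; rw [Xv_val hm]; exact A1 _
  have N3 : ∀ m, m < q-1 → 2*q+2 ≤ T.dist (f IVert.t) (f (Yv q hq10 m)) := by
    intro m hm; rw [Yv_val hm]; exact A3 _
  have N4 : ∀ m, m < q → T.dist (f IVert.b) (f (Xv q hq0 m)) ≤ 2*q+1 := by
    intro m hm; rw [Xv_val hm]; exact A4 _
  have N5 : T.dist (f IVert.b) (f (Yv q hq10 (q-2))) ≤ 2*q+1 := by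
    rw [Yv_val (by omega)]; exact A5
  have N6 : ∀ a i, a < q-1 → i < q → a < i →
      T.dist (f (Yv q hq10 a)) (f (Xv q hq0 i)) ≤ 2*q+1 := by
    intro a i ha hi hai; rw [Yv_val ha, Xv_val hi]; exact A6 _ _ (by simpa)
  have N7 : ∀ a i, a < q-1 → i < q → i ≤ a →
      2*q+2 ≤ T.dist (f (Yv q hq10 a)) (f (Xv q hq0 i)) := by
    intro a i ha hi hai; rw [Yv_val ha, Xv_val hi]; exact A7 _ _ (by simpa)
  have N8 : ∀ i j, i < q → j < q → i ≠ j →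
      T.dist (f (Xv q hq0 i)) (f (Xv q hq0 j)) ≤ 2*q+1 := by
    intro i j hi hj hij; rw [Xv_val hi, Xv_val hj]
    exact A8 _ _ (by simp [Fin.ext_iff]; exact hij)
  -- key Gromov-product identity
  have key1 : ∀ m, m ≤ q-2 →
      T.dist (f IVert.t) (f (Yv q hq10 m)) + (2*q+1)
        + T.dist (f (Xv q hq0 m)) (f (Xv q hq0 (q-1))) =
      2*(2*q+1) + T.dist (f (Yv q hq10 m)) (f (Xv q hq0 m)) := by
    intro m hm
    have hmq : m < q - 1 := by omega
    have hmq' : m < q := by omega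
    have hq1q : q - 1 < q := by omega
    have H1 := hHyp (Xv q hq0 m) (Yv q hq10 m) (Xv q hq0 (q-1))
    have H2 := hHyp (Yv q hq10 m) (Xv q hq0 (q-1)) (Xv q hq0 m)
    have n7 := N7 m m hmq hmq' le_rfl
    have n6 := N6 m (q-1) hmq hq1q (by omega)
    have n1a := N1 m hmq'
    have n1b := N1 (q-1) hq1q
    have c1 := hComm (Xv q hq0 m) (Yv q hq10 m)
    have c2 := hComm (Xv q hq0 (q-1)) (Xv q hq0 m)
    have c3 := hComm (Yv q hq10 m) (Xv q hq0 (q-1))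
    omega
  -- monotone chain
  have step : ∀ m, m + 1 ≤ q-2 →
      T.dist (f (Xv q hq0 (m+1))) (f (Xv q hq0 (q-1))) + 2 ≤
        T.dist (f (Xv q hq0 m)) (f (Xv q hq0 (q-1))) := by
    intro m hm
    have hmq : m < q-1 := by omega
    have hm1q : m+1 < q := by omega
    have hmq' : m < q := by omega
    have hq1q : q-1 < q := by omega
    have H := hHyp (Xv q hq0 (m+1)) (Yv q hq10 m) (Xv q hq0 (q-1))
    have k1 := key1 m (by omega)
    have n7 := N7 m m hmq hmq' le_rfl
    have n6a := N6 m (q-1) hmq hq1q (by omega)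
    have n6b := N6 m (m+1) hmq hm1q (by omega)
    have n1a := N1 (m+1) hm1q
    have n1b := N1 (q-1) hq1q
    have n1c := N1 m hmq'
    have c1 := hComm (Xv q hq0 (m+1)) (Yv q hq10 m)
    obtain ⟨n₁, hp1⟩ := hPar IVert.t (Xv q hq0 (m+1)) (Xv q hq0 (q-1))
    obtain ⟨n₂, hp2⟩ := hPar IVert.t (Xv q hq0 m) (Xv q hq0 (q-1))
    omega
  have chain : ∀ j, j ≤ q-2 →
      T.dist (f (Xv q hq0 (q-2))) (f (Xv q hq0 (q-1))) + 2*j ≤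
        T.dist (f (Xv q hq0 (q-2-j))) (f (Xv q hq0 (q-1))) := by
    intro j
    induction j with
    | zero => intro _; simp
    | succ n ih =>
      intro hn
      have h1 := ih (by omega)
      have h2 := step (q-2-(n+1)) (by omega)
      have he : q-2-(n+1)+1 = q-2-n := by omega
      rw [he] at h2
      omega
  -- final assembly
  have hq1q : q-1 < q := by omega
  have hq2q : q-2 < q := by omega
  have hq2q1 : q-2 < q-1 := by omega
  have k1 := key1 (q-2) le_rfl
  have n7 := N7 (q-2) (q-2) hq2q1 hq2q le_rfl
  have n6 := N6 (q-2) (q-1) hq2q1 hq1q (by omega)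
  have Hb := hHyp IVert.b (Yv q hq10 (q-2)) (Xv q hq0 (q-1))
  have tub := hT2 (Xv q hq0 (q-1)) IVert.t IVert.b (by simp [Xv]) (by simp [Xv])
  obtain ⟨n₁, hp1⟩ := hPar IVert.t IVert.b (Xv q hq0 (q-1))
  obtain ⟨n₂, hp2⟩ := hPar IVert.t (Xv q hq0 (q-2)) (Xv q hq0 (q-1))
  obtain ⟨n₃, hp3⟩ := hPar IVert.t (Xv q hq0 0) (Xv q hq0 (q-1))
  have ch := chain (q-2) le_rfl
  have h0 : q-2-(q-2) = 0 := by omega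
  rw [h0] at ch
  have n8 := N8 0 (q-1) hq0 hq1q (by omega)
  have Hf := hHyp (Xv q hq0 0) IVert.b (Xv q hq0 (q-1))
  have n40 := N4 0 hq0
  have n4q := N4 (q-1) hq1q
  have n10 := N1 0 hq0
  have n1q := N1 (q-1) hq1q
  have n1q2 := N1 (q-2) hq2q
  have c1 := hComm IVert.b (Yv q hq10 (q-2))
  have c2 := hComm IVert.b (Xv q hq0 (q-1))
  have c3 := hComm IVert.b (Xv q hq0 0)
  have c5 := hComm (Yv q hq10 (q-2)) (Xv q hq0 (q-1))
  have hfinal : T.dist (f IVert.b) (f (Xv q hq0 (q-1))) = 3 := by omega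
  -- conclude about mval
  have hXq1b : Xv q hq0 (q-1) ≠ IVert.b := by simp [Xv]
  have hmem : (3:ℕ) ∈ {d | ∃ u, u ≠ IVert.b ∧ T.dist (f u) (f IVert.b) = d} :=
    ⟨Xv q hq0 (q-1), hXq1b, by rw [SimpleGraph.dist_comm]; exact hfinal⟩
  show sInf {d | ∃ u, u ≠ IVert.b ∧ T.dist (f u) (f IVert.b) = d} = 3
  refine le_antisymm (Nat.sInf_le hmem) (le_csInf ⟨3, hmem⟩ ?_)
  rintro d ⟨u, hu, rfl⟩
  exact hLB u hu
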